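/- Let G = (V,E) be a finite connected simple graph and let w₁, w₂ : E → ℝ be injective edge-weight functions with w₂(e) ≤ w₁(e) for all e ∈ E; let E⁻ = { e ∈ E : w₂(e) < w₁(e) }. Let T₁ be a minimum-weight spanning tree of G with respect to w₁ and set B = T₁ ∪ E⁻. Let B* ⊆ B be a set such that B \ B* is a spanning tree of G and w₂(B*) ≥ w₂(B') for every B' ⊆ B such that B \ B' is a spanning tree of G. Then B \ B* is a minimum-weight spanning tree of G with respect to w₂. -/

import Mathlib

/-- The edge set `S` is acyclic: the graph `(V, S)` contains no cycle. -/
def EdgesAcyclic {V : Type*} (S : Finset (Sym2 V)) : Prop :=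
  (SimpleGraph.fromEdgeSet (S : Set (Sym2 V))).IsAcyclic

/-- The edge set `S` spans a connected graph `(V, S)` on the whole vertex set. -/
def EdgesConnected {V : Type*} (S : Finset (Sym2 V)) : Prop :=
  (SimpleGraph.fromEdgeSet (S : Set (Sym2 V))).Connected

/-- `T` is a spanning tree of `G`: a subset of the edges of `G` such that the
subgraph `(V, T)` is connected and acyclic. -/
def IsSpanningTree {V : Type*} (G : SimpleGraph V) (T : Finset (Sym2 V)) : Prop :=
  (T : Set (Sym2 V)) ⊆ G.edgeSet ∧ EdgesConnected T ∧ EdgesAcyclic T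

/-- The weight of an edge set: `w(S) = ∑_{e ∈ S} w(e)`. -/
def wsum {V : Type*} (w : Sym2 V → ℝ) (S : Finset (Sym2 V)) : ℝ := ∑ e ∈ S, w e

/-- `T` is a minimum-weight spanning tree of `G` with respect to `w`. -/
def IsMST {V : Type*} (G : SimpleGraph V) (w : Sym2 V → ℝ) (T : Finset (Sym2 V)) : Prop :=
  IsSpanningTree G T ∧ ∀ T' : Finset (Sym2 V), IsSpanningTree G T' → wsum w T ≤ wsum w T'

section MSTHelpers

open SimpleGraph

variable {V : Type*}

lemma mst_reachable_of_adj_imp {A B : SimpleGraph V} {x y : V}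
    (h : ∀ a b, A.Adj a b → B.Reachable a b) (hr : A.Reachable x y) : B.Reachable x y := by
  obtain ⟨w⟩ := hr
  induction w with
  | nil => exact Reachable.refl _
  | cons ha _ ih => exact (h _ _ ha).trans ih

lemma mst_graph_erase [DecidableEq V] (S : Finset (Sym2 V)) (e : Sym2 V) :
    SimpleGraph.fromEdgeSet (S : Set (Sym2 V)) \ SimpleGraph.fromEdgeSet {e}
      = SimpleGraph.fromEdgeSet ((S.erase e : Finset (Sym2 V)) : Set (Sym2 V)) := by
  ext x y
  simp only [sdiff_adj, fromEdgeSet_adj, Set.mem_singleton_iff, Finset.coe_erase,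
    Set.mem_diff, Finset.mem_coe]
  tauto

lemma mst_toggle [DecidableEq V] {T : Finset (Sym2 V)} {u v : V} (he : s(u,v) ∈ T)
    (x : V) (hr : (SimpleGraph.fromEdgeSet (T : Set (Sym2 V))).Reachable x u) :
    (SimpleGraph.fromEdgeSet ((T.erase s(u,v) : Finset (Sym2 V)) : Set (Sym2 V))).Reachable x u ∨
    (SimpleGraph.fromEdgeSet ((T.erase s(u,v) : Finset (Sym2 V)) : Set (Sym2 V))).Reachable x v := by
  obtain ⟨w⟩ := hr
  induction w with
  | nil => exact Or.inl (Reachable.refl _)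
  | @cons a b c ha p ih =>
    by_cases hab : s(a,b) = s(c,v)
    · rcases Sym2.eq_iff.mp hab with ⟨h1, h2⟩ | ⟨h1, h2⟩
      · subst h1; exact Or.inl (Reachable.refl _)
      · subst h1; exact Or.inr (Reachable.refl _)
    · have hadj : (SimpleGraph.fromEdgeSet
          ((T.erase s(c,v) : Finset (Sym2 V)) : Set (Sym2 V))).Adj a b := by
        rw [fromEdgeSet_adj] at ha ⊢
        exact ⟨Finset.mem_coe.mpr (Finset.mem_erase.mpr ⟨hab, Finset.mem_coe.mp ha.1⟩), ha.2⟩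
      rcases ih he with hb | hb
      · exact Or.inl (Reachable.trans ⟨Walk.cons hadj Walk.nil⟩ hb)
      · exact Or.inr (Reachable.trans ⟨Walk.cons hadj Walk.nil⟩ hb)

lemma mst_cross [DecidableEq V] {T : Finset (Sym2 V)} (H : SimpleGraph V) {u v : V}
    (p : (SimpleGraph.fromEdgeSet (T : Set (Sym2 V))).Walk u v) (hp : p.IsTrail)
    (hnr : ¬ H.Reachable u v) :
    ∃ a b, s(a,b) ∈ p.edges ∧ ¬ H.Reachable a b ∧
      (SimpleGraph.fromEdgeSet ((T.erase s(a,b) : Finset (Sym2 V)) : Set (Sym2 V))).Reachable u a ∧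
      (SimpleGraph.fromEdgeSet ((T.erase s(a,b) : Finset (Sym2 V)) : Set (Sym2 V))).Reachable b v := by
  induction p with
  | nil => exact absurd (Reachable.refl _) hnr
  | @cons x y z ha q ih =>
    have hq : q.IsTrail := hp.of_cons
    have hxy : s(x,y) ∉ q.edges := by
      have := hp.edges_nodup
      simp only [Walk.edges_cons, List.nodup_cons] at this
      exact this.1
    by_cases hr : H.Reachable x y
    · have hnr' : ¬ H.Reachable y z := fun r => hnr (hr.trans r)
      obtain ⟨a, b, hmem, hnab, hya, hbz⟩ := ih hq hnr'
      refine ⟨a, b, by simp [hmem], hnab, ?_, hbz⟩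
      have hne : s(x,y) ≠ s(a,b) := fun h => hxy (h ▸ hmem)
      refine Reachable.trans ⟨Walk.cons ?_ Walk.nil⟩ hya
      rw [fromEdgeSet_adj] at ha ⊢
      exact ⟨by simpa [Finset.mem_erase, hne] using ha.1, ha.2⟩
    · refine ⟨x, y, by simp, hr, Reachable.refl _, ?_⟩
      refine ⟨q.transfer _ fun e heq => ?_⟩
      have h1 : e ∈ (SimpleGraph.fromEdgeSet (T : Set (Sym2 V))).edgeSet :=
        q.edges_subset_edgeSet heq
      rw [edgeSet_fromEdgeSet] at h1 ⊢
      refine ⟨?_, h1.2⟩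
      have hne : e ≠ s(x,y) := fun h => hxy (h ▸ heq)
      simp only [Finset.coe_erase, Set.mem_diff, Set.mem_singleton_iff]
      exact ⟨h1.1, hne⟩

lemma mst_exists_tree_subset [DecidableEq V] (S : Finset (Sym2 V))
    (hc : EdgesConnected S) :
    ∃ T ⊆ S, EdgesConnected T ∧ EdgesAcyclic T := by
  induction S using Finset.strongInduction with
  | _ S ih =>
    by_cases ha : EdgesAcyclic S
    · exact ⟨S, Finset.Subset.refl _, hc, ha⟩
    · rw [EdgesAcyclic, isAcyclic_iff_forall_edge_isBridge] at ha
      push_neg at ha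
      obtain ⟨e, he, hnb⟩ := ha
      induction e using Sym2.ind with
      | _ a b =>
        rw [isBridge_iff] at hnb
        push_neg at hnb
        have hadj : (SimpleGraph.fromEdgeSet (S : Set (Sym2 V))).Adj a b :=
          (mem_edgeSet _).mp he
        have hre : (SimpleGraph.fromEdgeSet (S : Set (Sym2 V)) \ SimpleGraph.fromEdgeSet {s(a,b)}).Reachable a b := hnb
        rw [mst_graph_erase] at hre
        have hmem : s(a,b) ∈ S := by
          rw [edgeSet_fromEdgeSet] at he
          exact Finset.mem_coe.mp he.1
        have hcon : EdgesConnected (S.erase s(a,b)) := by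
          have : Nonempty V := hc.nonempty
          refine ⟨fun x y => mst_reachable_of_adj_imp (fun p q hpq => ?_)
            (hc.preconnected x y)⟩
          by_cases hpqe : s(p,q) = s(a,b)
          · rcases Sym2.eq_iff.mp hpqe with ⟨h1, h2⟩ | ⟨h1, h2⟩
            · subst h1; subst h2; exact hre
            · subst h1; subst h2; exact hre.symm
          · rw [fromEdgeSet_adj] at hpq
            exact Adj.reachable (by
              rw [fromEdgeSet_adj]
              exact ⟨Finset.mem_coe.mpr (Finset.mem_erase.mpr
                ⟨hpqe, Finset.mem_coe.mp hpq.1⟩), hpq.2⟩)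
        obtain ⟨T, hTs, hTc, hTa⟩ := ih (S.erase s(a,b))
          (Finset.erase_ssubset hmem) hcon
        exact ⟨T, hTs.trans (Finset.erase_subset _ _), hTc, hTa⟩

lemma mst_tree_card [Fintype V] (S : Finset (Sym2 V)) (hd : ∀ e ∈ S, ¬ e.IsDiag)
    (hc : EdgesConnected S) (ha : EdgesAcyclic S) : S.card = Fintype.card V - 1 := by
  classical
  have ht : (SimpleGraph.fromEdgeSet (S : Set (Sym2 V))).IsTree := ⟨hc, ha⟩
  have h1 : (SimpleGraph.fromEdgeSet (S : Set (Sym2 V))).edgeSet = (S : Set (Sym2 V)) := by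
    rw [edgeSet_fromEdgeSet]
    ext e
    simp only [Set.mem_diff, Set.mem_setOf_eq, Finset.mem_coe, and_iff_left_iff_imp]
    exact fun he => hd e he
  have h2 := ht.card_edgeFinset
  rw [show (SimpleGraph.fromEdgeSet (S : Set (Sym2 V))).edgeFinset = S by
    simp [SimpleGraph.edgeFinset, h1]] at h2
  omega

lemma mst_acyclic_of_card [Fintype V] [DecidableEq V] (S : Finset (Sym2 V))
    (hd : ∀ e ∈ S, ¬ e.IsDiag) (hc : EdgesConnected S)
    (hcard : S.card ≤ Fintype.card V - 1) : EdgesAcyclic S := by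
  obtain ⟨T, hTS, hTc, hTa⟩ := mst_exists_tree_subset S hc
  have hT : T = S := Finset.eq_of_subset_of_card_le hTS (by
    rw [mst_tree_card T (fun e he => hd e (hTS he)) hTc hTa]; exact hcard)
  rwa [hT] at hTa

end MSTHelpers

/-- Let `w₂ ≤ w₁` be injective edge weights on a finite connected simple
graph, `E⁻ = { e : w₂(e) < w₁(e) }`, `T₁` an MST for `w₁`, `B = T₁ ∪ E⁻`. If `B* ⊆ B`
is such that `B \ B*` is a spanning tree and `w₂(B*)` is maximum among all `B' ⊆ B` with
`B \ B'` a spanning tree, then `B \ B*` is an MST for `w₂`. -/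
theorem stmt_9 {V : Type*} [Fintype V] [DecidableEq V] (G : SimpleGraph V)
    (hG : G.Connected) (w₁ w₂ : Sym2 V → ℝ)
    (hw₁ : Set.InjOn w₁ G.edgeSet) (hw₂ : Set.InjOn w₂ G.edgeSet)
    (hle : ∀ e ∈ G.edgeSet, w₂ e ≤ w₁ e)
    (Eminus : Finset (Sym2 V)) (hEm : ∀ e, e ∈ Eminus ↔ e ∈ G.edgeSet ∧ w₂ e < w₁ e)
    (T₁ : Finset (Sym2 V)) (hT₁ : IsMST G w₁ T₁)
    (Bstar : Finset (Sym2 V)) (hBsub : Bstar ⊆ T₁ ∪ Eminus)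
    (hBst : IsSpanningTree G ((T₁ ∪ Eminus) \ Bstar))
    (hBmax : ∀ B' : Finset (Sym2 V), B' ⊆ T₁ ∪ Eminus →
      IsSpanningTree G ((T₁ ∪ Eminus) \ B') → wsum w₂ B' ≤ wsum w₂ Bstar) :
    IsMST G w₂ ((T₁ ∪ Eminus) \ Bstar) := by
  classical
  open SimpleGraph in
  obtain ⟨hT₁st, hT₁min⟩ := hT₁
  obtain ⟨hT₁sub, hT₁c, hT₁a⟩ := hT₁st
  -- the finite set of all spanning trees of G
  set ST : Finset (Finset (Sym2 V)) :=
    (G.edgeFinset.powerset).filter (fun T => IsSpanningTree G T) with hST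
  have hmemST : ∀ T : Finset (Sym2 V), T ∈ ST ↔ IsSpanningTree G T := by
    intro T
    rw [hST, Finset.mem_filter, Finset.mem_powerset]
    constructor
    · exact fun h => h.2
    · intro h
      refine ⟨?_, h⟩
      intro e he
      rw [SimpleGraph.mem_edgeFinset]
      exact h.1 (Finset.mem_coe.mpr he)
  -- a spanning tree exists
  have hGE : EdgesConnected G.edgeFinset := by
    rw [EdgesConnected, SimpleGraph.coe_edgeFinset, SimpleGraph.fromEdgeSet_edgeSet]
    exact hG
  obtain ⟨T0, hT0sub, hT0c, hT0a⟩ := mst_exists_tree_subset G.edgeFinset hGE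
  have hT0st : IsSpanningTree G T0 := by
    refine ⟨?_, hT0c, hT0a⟩
    intro e he
    rw [← SimpleGraph.mem_edgeFinset]
    exact hT0sub (Finset.mem_coe.mp he)
  -- a w₂-minimum spanning tree T₂
  obtain ⟨T₂, hT₂ST, hT₂min⟩ :=
    Finset.exists_min_image ST (wsum w₂) ⟨T0, (hmemST T0).mpr hT0st⟩
  obtain ⟨hT₂sub, hT₂c, hT₂a⟩ := (hmemST T₂).mp hT₂ST
  have hT₂min' : ∀ T', IsSpanningTree G T' → wsum w₂ T₂ ≤ wsum w₂ T' :=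
    fun T' h => hT₂min T' ((hmemST T').mpr h)
  -- no-diagonal facts
  have hdT₁ : ∀ e ∈ T₁, ¬ e.IsDiag :=
    fun e he => G.not_isDiag_of_mem_edgeSet (hT₁sub (Finset.mem_coe.mpr he))
  have hdT₂ : ∀ e ∈ T₂, ¬ e.IsDiag :=
    fun e he => G.not_isDiag_of_mem_edgeSet (hT₂sub (Finset.mem_coe.mpr he))
  have hcard₁ : T₁.card = Fintype.card V - 1 := mst_tree_card T₁ hdT₁ hT₁c hT₁a
  have hcard₂ : T₂.card = Fintype.card V - 1 := mst_tree_card T₂ hdT₂ hT₂c hT₂a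
  -- KEY: T₂ ⊆ T₁ ∪ Eminus
  have hkey : T₂ ⊆ T₁ ∪ Eminus := by
    intro e he2
    by_contra hnot
    rw [Finset.mem_union] at hnot
    push_neg at hnot
    obtain ⟨heT₁, heEm⟩ := hnot
    have heG : e ∈ G.edgeSet := hT₂sub (Finset.mem_coe.mpr he2)
    have heqw : w₂ e = w₁ e := by
      rcases lt_or_eq_of_le (hle e heG) with h | h
      · exact absurd ((hEm e).mpr ⟨heG, h⟩) heEm
      · exact h
    obtain ⟨⟨u, v⟩, rfl⟩ := Quot.exists_rep e
    have hadjuv : G.Adj u v := (SimpleGraph.mem_edgeSet G).mp heG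
    have huv : u ≠ v := hadjuv.ne
    -- s(u,v) is a bridge of the tree T₂
    have hbr := (SimpleGraph.isAcyclic_iff_forall_edge_isBridge.mp hT₂a)
      (e := s(u,v)) (by
        rw [SimpleGraph.edgeSet_fromEdgeSet]
        exact ⟨Finset.mem_coe.mpr he2, by simp [huv]⟩)
    rw [SimpleGraph.isBridge_iff] at hbr
    have hnruv : ¬ (SimpleGraph.fromEdgeSet
        ((T₂.erase s(u,v) : Finset (Sym2 V)) : Set (Sym2 V))).Reachable u v := by
      rw [← mst_graph_erase]
      exact hbr
    -- a path in T₁ from u to v, and a crossing edge s(a,b) on it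
    obtain ⟨p0⟩ := hT₁c.preconnected u v
    obtain ⟨a, b, hmem, hnab, hua, hbv⟩ :=
      mst_cross _ (p0.toPath : SimpleGraph.Path _ u v).1
        (p0.toPath : SimpleGraph.Path _ u v).2.isTrail hnruv
    have hfT₁ : s(a,b) ∈ T₁ := by
      have := ((p0.toPath : SimpleGraph.Path _ u v).1).edges_subset_edgeSet hmem
      rw [SimpleGraph.edgeSet_fromEdgeSet] at this
      exact Finset.mem_coe.mp this.1
    have hfG : s(a,b) ∈ G.edgeSet := hT₁sub (Finset.mem_coe.mpr hfT₁)
    have hab : a ≠ b := fun h => hnab (h ▸ SimpleGraph.Reachable.refl _)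
    have heT₁' : s(u,v) ∉ T₁ := heT₁
    have hfe : s(a,b) ≠ s(u,v) := fun h => heT₁' (h ▸ hfT₁)
    have hfT₂ : s(a,b) ∉ T₂ := by
      intro h
      exact hnab (SimpleGraph.Adj.reachable (by
        rw [SimpleGraph.fromEdgeSet_adj]
        exact ⟨Finset.mem_coe.mpr (Finset.mem_erase.mpr ⟨hfe, h⟩), hab⟩))
    -- the swap S₁ = T₁ - s(a,b) + s(u,v) is a spanning tree
    set S₁ : Finset (Sym2 V) := insert s(u,v) (T₁.erase s(a,b)) with hS₁def
    have hS₁sub : (S₁ : Set (Sym2 V)) ⊆ G.edgeSet := by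
      intro g hg
      rw [hS₁def] at hg
      simp only [Finset.coe_insert, Set.mem_insert_iff, Finset.coe_erase, Set.mem_diff,
        Finset.mem_coe] at hg
      rcases hg with rfl | ⟨hg1, _⟩
      · exact heG
      · exact hT₁sub (Finset.mem_coe.mpr hg1)
    have hES₁ : SimpleGraph.fromEdgeSet ((T₁.erase s(a,b) : Finset (Sym2 V)) : Set (Sym2 V)) ≤
        SimpleGraph.fromEdgeSet (S₁ : Set (Sym2 V)) :=
      SimpleGraph.fromEdgeSet_mono (by
        rw [hS₁def]; exact_mod_cast Finset.subset_insert _ _)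
    have hS₁adjuv : (SimpleGraph.fromEdgeSet (S₁ : Set (Sym2 V))).Adj u v := by
      rw [SimpleGraph.fromEdgeSet_adj]
      exact ⟨Finset.mem_coe.mpr (Finset.mem_insert_self _ _), huv⟩
    have hS₁ab : (SimpleGraph.fromEdgeSet (S₁ : Set (Sym2 V))).Reachable a b :=
      ((hua.mono hES₁).symm.trans hS₁adjuv.reachable).trans (hbv.mono hES₁).symm
    have hS₁c : EdgesConnected S₁ := by
      have hne : Nonempty V := hT₁c.nonempty
      refine ⟨fun x y => mst_reachable_of_adj_imp (fun p q hpq => ?_)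
        (hT₁c.preconnected x y)⟩
      by_cases hpqe : s(p,q) = s(a,b)
      · rcases Sym2.eq_iff.mp hpqe with ⟨h1, h2⟩ | ⟨h1, h2⟩
        · subst h1; subst h2; exact hS₁ab
        · subst h1; subst h2; exact hS₁ab.symm
      · rw [SimpleGraph.fromEdgeSet_adj] at hpq
        exact SimpleGraph.Adj.reachable (by
          rw [SimpleGraph.fromEdgeSet_adj]
          refine ⟨?_, hpq.2⟩
          rw [hS₁def]
          exact Finset.mem_coe.mpr (Finset.mem_insert_of_mem
            (Finset.mem_erase.mpr ⟨hpqe, Finset.mem_coe.mp hpq.1⟩)))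
    have hfcard₁ : (T₁.erase s(a,b)).card = T₁.card - 1 := Finset.card_erase_of_mem hfT₁
    have hT₁pos : 0 < T₁.card := Finset.card_pos.mpr ⟨_, hfT₁⟩
    have hS₁card : S₁.card = T₁.card := by
      rw [hS₁def, Finset.card_insert_of_notMem (fun h => heT₁ (Finset.mem_of_mem_erase h)),
        hfcard₁]
      omega
    have hS₁a : EdgesAcyclic S₁ := by
      refine mst_acyclic_of_card S₁
        (fun g hg => G.not_isDiag_of_mem_edgeSet (hS₁sub (Finset.mem_coe.mpr hg)))
        hS₁c ?_
      rw [hS₁card, hcard₁]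
    have hS₁st : IsSpanningTree G S₁ := ⟨hS₁sub, hS₁c, hS₁a⟩
    -- weight comparison for w₁
    have hwsum₁ : wsum w₁ S₁ = w₁ s(u,v) + (wsum w₁ T₁ - w₁ s(a,b)) := by
      rw [hS₁def, wsum, Finset.sum_insert (fun h => heT₁ (Finset.mem_of_mem_erase h)),
        Finset.sum_erase_eq_sub hfT₁]
      rfl
    have hle₁ : wsum w₁ T₁ ≤ wsum w₁ S₁ := hT₁min S₁ hS₁st
    have hflee : w₁ s(a,b) ≤ w₁ s(u,v) := by rw [hwsum₁] at hle₁; linarith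
    have hflt : w₁ s(a,b) < w₁ s(u,v) :=
      lt_of_le_of_ne hflee (fun h => hfe (hw₁ hfG heG h))
    have hw2lt : w₂ s(a,b) < w₂ s(u,v) := by
      have := hle s(a,b) hfG
      rw [heqw]
      linarith
    -- the swap S₂ = T₂ - s(u,v) + s(a,b) is a spanning tree
    set S₂ : Finset (Sym2 V) := insert s(a,b) (T₂.erase s(u,v)) with hS₂def
    have hS₂sub : (S₂ : Set (Sym2 V)) ⊆ G.edgeSet := by
      intro g hg
      rw [hS₂def] at hg
      simp only [Finset.coe_insert, Set.mem_insert_iff, Finset.coe_erase, Set.mem_diff,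
        Finset.mem_coe] at hg
      rcases hg with rfl | ⟨hg1, _⟩
      · exact hfG
      · exact hT₂sub (Finset.mem_coe.mpr hg1)
    have hES₂ : SimpleGraph.fromEdgeSet ((T₂.erase s(u,v) : Finset (Sym2 V)) : Set (Sym2 V)) ≤
        SimpleGraph.fromEdgeSet (S₂ : Set (Sym2 V)) :=
      SimpleGraph.fromEdgeSet_mono (by
        rw [hS₂def]; exact_mod_cast Finset.subset_insert _ _)
    have hS₂adjab : (SimpleGraph.fromEdgeSet (S₂ : Set (Sym2 V))).Adj a b := by
      rw [SimpleGraph.fromEdgeSet_adj]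
      exact ⟨Finset.mem_coe.mpr (Finset.mem_insert_self _ _), hab⟩
    have hS₂uv : (SimpleGraph.fromEdgeSet (S₂ : Set (Sym2 V))).Reachable u v := by
      have hta := mst_toggle he2 a (hT₂c.preconnected a u)
      have htb := mst_toggle he2 b (hT₂c.preconnected b u)
      rcases hta with hta | hta <;> rcases htb with htb | htb
      · exact absurd (hta.trans htb.symm) hnab
      · exact ((hta.mono hES₂).symm.trans hS₂adjab.reachable).trans (htb.mono hES₂)
      · exact ((htb.mono hES₂).symm.trans hS₂adjab.reachable.symm).trans
          (hta.mono hES₂)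
      · exact absurd (hta.trans htb.symm) hnab
    have hS₂c : EdgesConnected S₂ := by
      have hne : Nonempty V := hT₂c.nonempty
      refine ⟨fun x y => mst_reachable_of_adj_imp (fun p q hpq => ?_)
        (hT₂c.preconnected x y)⟩
      by_cases hpqe : s(p,q) = s(u,v)
      · rcases Sym2.eq_iff.mp hpqe with ⟨h1, h2⟩ | ⟨h1, h2⟩
        · subst h1; subst h2; exact hS₂uv
        · subst h1; subst h2; exact hS₂uv.symm
      · rw [SimpleGraph.fromEdgeSet_adj] at hpq
        exact SimpleGraph.Adj.reachable (by
          rw [SimpleGraph.fromEdgeSet_adj]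
          refine ⟨?_, hpq.2⟩
          rw [hS₂def]
          exact Finset.mem_coe.mpr (Finset.mem_insert_of_mem
            (Finset.mem_erase.mpr ⟨hpqe, Finset.mem_coe.mp hpq.1⟩)))
    have hT₂pos : 0 < T₂.card := Finset.card_pos.mpr ⟨_, he2⟩
    have hS₂card : S₂.card = T₂.card := by
      rw [hS₂def, Finset.card_insert_of_notMem (fun h => hfT₂ (Finset.mem_of_mem_erase h)),
        Finset.card_erase_of_mem he2]
      omega
    have hS₂a : EdgesAcyclic S₂ := by
      refine mst_acyclic_of_card S₂
        (fun g hg => G.not_isDiag_of_mem_edgeSet (hS₂sub (Finset.mem_coe.mpr hg)))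
        hS₂c ?_
      rw [hS₂card, hcard₂]
    have hS₂st : IsSpanningTree G S₂ := ⟨hS₂sub, hS₂c, hS₂a⟩
    -- contradiction with minimality of T₂
    have hwsum₂ : wsum w₂ S₂ = w₂ s(a,b) + (wsum w₂ T₂ - w₂ s(u,v)) := by
      rw [hS₂def, wsum, Finset.sum_insert (fun h => hfT₂ (Finset.mem_of_mem_erase h)),
        Finset.sum_erase_eq_sub he2]
      rfl
    have := hT₂min' S₂ hS₂st
    rw [hwsum₂] at this
    linarith
  -- conclude
  set B : Finset (Sym2 V) := T₁ ∪ Eminus with hBdef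
  have hBT₂ : B \ (B \ T₂) = T₂ := by
    rw [Finset.sdiff_sdiff_self_left, Finset.inter_eq_right.mpr hkey]
  have h1 := hBmax (B \ T₂) (Finset.sdiff_subset) (by rw [hBT₂]; exact ⟨hT₂sub, hT₂c, hT₂a⟩)
  have h2 : wsum w₂ (B \ T₂) + wsum w₂ T₂ = wsum w₂ B := Finset.sum_sdiff hkey
  have h3 : wsum w₂ (B \ Bstar) + wsum w₂ Bstar = wsum w₂ B := Finset.sum_sdiff hBsub
  refine ⟨hBst, fun T' hT' => ?_⟩
  have h4 := hT₂min' T' hT'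
  have h5 : wsum w₂ (B \ Bstar) ≤ wsum w₂ T₂ := by linarith
  linarith
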